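/- Let M and M' be fuzzy Kripke models over a linear residuated lattice L. If Z₁ and Z₂ are fuzzy bisimulations between M and M', then their pointwise join Z₁ ∪ Z₂, defined by (Z₁ ∪ Z₂)(x,x') = Z₁(x,x') ∨ Z₂(x,x'), is also a fuzzy bisimulation between M and M'. -/
import Mathlib


class ResLat (α : Type*) extends Lattice α, CommMonoid α, BoundedOrder α where
  rimp : α → α → α
  adj : ∀ x y z : α, x * y ≤ z ↔ x ≤ rimp y z
  one_eq_top : (1 : α) = ⊤

/-- The biresiduum `(a → b) ⊓ (b → a)`. -/
def bires {α : Type*} [ResLat α] (a b : α) : α := ResLat.rimp a b ⊓ ResLat.rimp b a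

/-- A fuzzy Kripke model over actions `A`, propositions `P`, with domain `W`. -/
structure FKM (A P W : Type*) (α : Type*) where
  prop : P → W → α
  rel : A → W → W → α

/-- `Z` is a fuzzy bisimulation between `M` and `M'`. -/
def IsFuzzyBisim {A P W W' α : Type*} [ResLat α]
    (M : FKM A P W α) (M' : FKM A P W' α) (Z : W → W' → α) : Prop :=
  (∀ (p : P) (x : W) (x' : W'), Z x x' ≤ bires (M.prop p x) (M'.prop p x')) ∧
  (∀ (ρ : A) (x y : W) (x' : W'), ∃ y' : W',
      Z x x' * M.rel ρ x y ≤ M'.rel ρ x' y' * Z y y') ∧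
  (∀ (ρ : A) (x : W) (x' y' : W'), ∃ y : W,
      Z x x' * M'.rel ρ x' y' ≤ M.rel ρ x y * Z y y')

lemma ResLat.mul_mono_left {α : Type*} [ResLat α] {a a' : α} (h : a ≤ a') (b : α) :
    a * b ≤ a' * b := by
  have h1 : a' ≤ ResLat.rimp b (a' * b) := (ResLat.adj a' b (a' * b)).mp le_rfl
  exact (ResLat.adj a b (a' * b)).mpr (le_trans h h1)

theorem stmt19 {A P W W' α : Type*} [ResLat α]
    [Nonempty W] [Nonempty W']
    (linear : ∀ a b : α, a ≤ b ∨ b ≤ a)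
    (M : FKM A P W α) (M' : FKM A P W' α)
    (Z₁ Z₂ : W → W' → α)
    (h₁ : IsFuzzyBisim M M' Z₁) (h₂ : IsFuzzyBisim M M' Z₂) :
    IsFuzzyBisim M M' (fun x x' => Z₁ x x' ⊔ Z₂ x x') := by
  obtain ⟨p1, f1, b1⟩ := h₁
  obtain ⟨p2, f2, b2⟩ := h₂
  refine ⟨fun p x x' => sup_le (p1 p x x') (p2 p x x'), ?_, ?_⟩
  · intro ρ x y x'
    rcases linear (Z₁ x x') (Z₂ x x') with h | h
    · obtain ⟨y', hy'⟩ := f2 ρ x y x'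
      refine ⟨y', ?_⟩
      simp only [sup_of_le_right h]
      exact le_trans hy' (by
        rw [mul_comm (M'.rel ρ x' y'), mul_comm (M'.rel ρ x' y')]
        exact ResLat.mul_mono_left le_sup_right _)
    · obtain ⟨y', hy'⟩ := f1 ρ x y x'
      refine ⟨y', ?_⟩
      simp only [sup_of_le_left h]
      exact le_trans hy' (by
        rw [mul_comm (M'.rel ρ x' y'), mul_comm (M'.rel ρ x' y')]
        exact ResLat.mul_mono_left le_sup_left _)
  · intro ρ x x' y'
    rcases linear (Z₁ x x') (Z₂ x x') with h | h
    · obtain ⟨y, hy⟩ := b2 ρ x x' y'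
      refine ⟨y, ?_⟩
      simp only [sup_of_le_right h]
      exact le_trans hy (by
        rw [mul_comm (M.rel ρ x y), mul_comm (M.rel ρ x y)]
        exact ResLat.mul_mono_left le_sup_right _)
    · obtain ⟨y, hy⟩ := b1 ρ x x' y'
      refine ⟨y, ?_⟩
      simp only [sup_of_le_left h]
      exact le_trans hy (by
        rw [mul_comm (M.rel ρ x y), mul_comm (M.rel ρ x y)]
        exact ResLat.mul_mono_left le_sup_left _)
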